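/- Fix strictly positive weights μ ∈ ℝ^N_{>0}, let ω_1,…,ω_m be the distinct feature-value vectors in the pool with classes N|_{ω_j} of sizes n_j, and let φ_μ and C_μ be as in the layered weighted dynamic program. Define transition probabilities p_{j,z}(d) = C_μ(j,d)·φ_μ(j+1, z + d·ω_j)/φ_μ(j,z) and within-class subset probabilities q_{j,d}(S) = (∏_{i∈S} μ_i)/C_μ(j,d) for S ⊆ N|_{ω_j} with |S| = d. Then for every set P ⊆ N with w(P) ∈ Z̄, setting S_j = P ∩ N|_{ω_j}, d_j = |S_j|, z_1 = 0 and z_{j+1} = z_j + d_j·ω_j, the telescoping identity ∏_{j=1}^m p_{j,z_j}(d_j) · ∏_{j=1}^m q_{j,d_j}(S_j) = (∏_{i∈P} μ_i) / φ_μ(1, 0) holds; consequently the sequential sampling algorithm outputs each such P with probability proportional to ∏_{i∈P} μ_i. -/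

import Mathlib

open scoped Classical

lemma telescope_prod_aux (g : ℕ → ℝ) (m : ℕ) (h : ∀ j ≤ m, g j ≠ 0) :
    ∏ j ∈ Finset.range m, g (j + 1) / g j = g m / g 0 := by
  induction m with
  | zero => simp [div_self (h 0 le_rfl)]
  | succ m ih =>
    rw [Finset.prod_range_succ, ih (fun j hj => h j (hj.trans (Nat.le_succ m)))]
    have h0 := h 0 (Nat.zero_le _)
    have hm := h m (Nat.le_succ m)
    field_simp

lemma cancel_aux (a b c q : ℝ) (hc : c ≠ 0) : c * a / b * (q / c) = a / b * q := by
  rcases eq_or_ne b 0 with rfl | hb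
  · simp
  · field_simp

/-- The layered weighted counting function `φ_μ(j, z)` (classes 0-indexed). -/
noncomputable def layerCount {FV : Type*} (n m : ℕ) (cls : Fin n → Fin m)
    (μ : Fin n → ℝ) (w : Fin n → FV → ℕ) (Zbar : Set (FV → ℕ))
    (j : ℕ) (z : FV → ℕ) : ℝ :=
  ∑ U ∈ Finset.univ.filter (fun U : Finset (Fin n) =>
      (∀ t ∈ U, j ≤ ((cls t : ℕ))) ∧ (z + ∑ t ∈ U, w t) ∈ Zbar),
    ∏ t ∈ U, μ t

/-- `C_μ(j, d)`: weighted number of `d`-element subsets of the class `N|_{ω_j}`. -/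
noncomputable def classCoeff (n m : ℕ) (cls : Fin n → Fin m) (μ : Fin n → ℝ)
    (j : Fin m) (d : ℕ) : ℝ :=
  ∑ S ∈ Finset.univ.filter (fun S : Finset (Fin n) =>
      (∀ t ∈ S, cls t = j) ∧ S.card = d),
    ∏ t ∈ S, μ t

/-- The telescoping identity for the sequential sampling algorithm: for every
set `P` of pool members with quota-compliant profile, with `S_j = P ∩ N|_{ω_j}`, `d_j = |S_j|`,
`z_0 = 0`, `z_{j+1} = z_j + d_j·ω_j`, we have
`∏_j p_{j, z_j}(d_j) · ∏_j q_{j, d_j}(S_j) = (∏_{i∈P} μ_i) / φ_μ(0, 0)`,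
where `p_{j,z}(d) = C_μ(j,d)·φ_μ(j+1, z + d·ω_j)/φ_μ(j,z)` and
`q_{j,d}(S) = (∏_{i∈S} μ_i)/C_μ(j,d)`; hence the sequential sampling algorithm outputs each such
`P` with probability proportional to `∏_{i∈P} μ_i`. -/
theorem sequential_sampling_telescoping
    (n m : ℕ) {F : Type*} [Fintype F] {V : F → Type*} [∀ f, Fintype (V f)]
    (feat : Fin n → ∀ f : F, V f) (k : ℕ)
    (ℓ u : ((f : F) × V f) → ℕ) (f0 : F)
    (hℓu : ∀ fv, ℓ fv ≤ u fv) (huk : ∀ fv, u fv ≤ k)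
    (w : Fin n → ((f : F) × V f) → ℕ)
    (hw : ∀ i f v, w i ⟨f, v⟩ = if feat i f = v then 1 else 0)
    (Zbar : Set (((f : F) × V f) → ℕ))
    (hZ : Zbar = {z | (∀ fv, ℓ fv ≤ z fv ∧ z fv ≤ u fv) ∧ ∑ v : V f0, z ⟨f0, v⟩ = k})
    (ω : Fin m → ((f : F) × V f) → ℕ) (hω : Function.Injective ω)
    (cls : Fin n → Fin m) (hwcls : ∀ i, w i = ω (cls i))
    (μ : Fin n → ℝ) (hμ : ∀ i, 0 < μ i)
    (P : Finset (Fin n)) (hP : (∑ i ∈ P, w i) ∈ Zbar)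
    (d : Fin m → ℕ) (hd : ∀ j, d j = (P.filter fun i => cls i = j).card)
    (traj : ℕ → ((f : F) × V f) → ℕ)
    (htraj0 : traj 0 = 0)
    (htrajS : ∀ j : Fin m, traj ((j : ℕ) + 1) = traj (j : ℕ) + d j • ω j) :
    (∏ j : Fin m,
        classCoeff n m cls μ j (d j) *
            layerCount n m cls μ w Zbar ((j : ℕ) + 1) (traj ((j : ℕ) + 1)) /
          layerCount n m cls μ w Zbar (j : ℕ) (traj (j : ℕ))) *
      (∏ j : Fin m,
        (∏ i ∈ P.filter fun i => cls i = j, μ i) / classCoeff n m cls μ j (d j)) =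
      (∏ i ∈ P, μ i) / layerCount n m cls μ w Zbar 0 0 := by
  classical
  -- trajectory formula
  have htraj : ∀ jn, jn ≤ m →
      traj jn = ∑ i ∈ P.filter (fun i => (cls i : ℕ) < jn), w i := by
    intro jn
    induction jn with
    | zero =>
      intro _
      simp [htraj0, Nat.not_lt_zero]
    | succ j ih =>
      intro hjn
      have hjm : j < m := hjn
      have h := htrajS ⟨j, hjm⟩
      rw [show ((⟨j, hjm⟩ : Fin m) : ℕ) = j from rfl] at h
      rw [h, ih (le_of_lt hjm)]
      have hsum : ∑ i ∈ P.filter (fun i => cls i = ⟨j, hjm⟩), w i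
          = d ⟨j, hjm⟩ • ω ⟨j, hjm⟩ := by
        rw [Finset.sum_congr rfl
          (fun i hi => by rw [hwcls, (Finset.mem_filter.mp hi).2]),
          Finset.sum_const, hd]
      have hfe : P.filter (fun i => (cls i : ℕ) < j + 1)
          = P.filter (fun i => (cls i : ℕ) < j) ∪
            P.filter (fun i => cls i = ⟨j, hjm⟩) := by
        rw [← Finset.filter_or]
        apply Finset.filter_congr
        intro i _
        simp [Nat.lt_succ_iff_lt_or_eq, Fin.ext_iff]
        exact Nat.le_iff_lt_or_eq
      have hdisj : Disjoint (P.filter (fun i => (cls i : ℕ) < j))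
          (P.filter (fun i => cls i = ⟨j, hjm⟩)) := by
        rw [Finset.disjoint_left]
        intro i hi1 hi2
        have h1 := (Finset.mem_filter.mp hi1).2
        have h2 := (Finset.mem_filter.mp hi2).2
        rw [h2] at h1
        exact absurd h1 (lt_irrefl j)
      rw [hfe, Finset.sum_union hdisj, hsum]
  -- split of the total sum
  have hsplit : ∀ jn : ℕ, (∑ i ∈ P.filter (fun i => (cls i : ℕ) < jn), w i)
      + ∑ i ∈ P.filter (fun i => jn ≤ (cls i : ℕ)), w i = ∑ i ∈ P, w i := by
    intro jn
    have := Finset.sum_filter_add_sum_filter_not P (fun i => (cls i : ℕ) < jn) w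
    simpa [not_lt] using this
  -- positivity of classCoeff along P
  have hC : ∀ j : Fin m, 0 < classCoeff n m cls μ j (d j) := by
    intro j
    apply Finset.sum_pos
    · intro S _
      exact Finset.prod_pos (fun i _ => hμ i)
    · refine ⟨P.filter (fun i => cls i = j), ?_⟩
      simp only [Finset.mem_filter, Finset.mem_univ, true_and]
      exact ⟨fun t ht => ht.2, (hd j).symm⟩
  -- positivity of layerCount along the trajectory
  have hφ : ∀ jn, jn ≤ m → 0 < layerCount n m cls μ w Zbar jn (traj jn) := by
    intro jn hjn
    apply Finset.sum_pos
    · intro U _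
      exact Finset.prod_pos (fun i _ => hμ i)
    · refine ⟨P.filter (fun i => jn ≤ (cls i : ℕ)), ?_⟩
      simp only [Finset.mem_filter, Finset.mem_univ, true_and]
      refine ⟨fun t ht => ht.2, ?_⟩
      rw [htraj jn hjn, hsplit jn]
      exact hP
  -- final layerCount is 1
  have hgm : layerCount n m cls μ w Zbar m (traj m) = 1 := by
    have hfm : P.filter (fun i => (cls i : ℕ) < m) = P :=
      Finset.filter_true_of_mem (fun i _ => (cls i).isLt)
    unfold layerCount
    have hset : Finset.univ.filter (fun U : Finset (Fin n) =>
        (∀ t ∈ U, m ≤ ((cls t : ℕ))) ∧ (traj m + ∑ t ∈ U, w t) ∈ Zbar)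
        = {∅} := by
      ext U
      simp only [Finset.mem_filter, Finset.mem_univ, true_and, Finset.mem_singleton]
      constructor
      · rintro ⟨h1, -⟩
        ext t
        simp only [Finset.notMem_empty, iff_false]
        intro ht
        exact absurd (h1 t ht) (not_le.mpr (cls t).isLt)
      · rintro rfl
        refine ⟨by simp, ?_⟩
        have : traj m = ∑ i ∈ P, w i := by rw [htraj m le_rfl, hfm]
        simpa [this] using hP
    rw [hset]
    simp
  -- fiberwise product
  have hprodP : ∏ j : Fin m, ∏ i ∈ P.filter (fun i => cls i = j), μ i
      = ∏ i ∈ P, μ i :=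
    Finset.prod_fiberwise_of_maps_to (fun i _ => Finset.mem_univ (cls i)) μ
  rw [← Finset.prod_mul_distrib]
  have hstep : ∀ j : Fin m,
      classCoeff n m cls μ j (d j) *
          layerCount n m cls μ w Zbar ((j : ℕ) + 1) (traj ((j : ℕ) + 1)) /
        layerCount n m cls μ w Zbar (j : ℕ) (traj (j : ℕ)) *
        ((∏ i ∈ P.filter fun i => cls i = j, μ i) / classCoeff n m cls μ j (d j))
      = layerCount n m cls μ w Zbar ((j : ℕ) + 1) (traj ((j : ℕ) + 1)) /
          layerCount n m cls μ w Zbar (j : ℕ) (traj (j : ℕ)) *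
          ∏ i ∈ P.filter (fun i => cls i = j), μ i := by
    intro j
    exact cancel_aux _ _ _ _ (hC j).ne'
  rw [Finset.prod_congr rfl (fun j _ => hstep j), Finset.prod_mul_distrib, hprodP]
  have hfin : ∏ j : Fin m,
      layerCount n m cls μ w Zbar ((j : ℕ) + 1) (traj ((j : ℕ) + 1)) /
        layerCount n m cls μ w Zbar (j : ℕ) (traj (j : ℕ))
      = ∏ jn ∈ Finset.range m,
          layerCount n m cls μ w Zbar (jn + 1) (traj (jn + 1)) /
            layerCount n m cls μ w Zbar jn (traj jn) :=
    Fin.prod_univ_eq_prod_range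
      (fun jn => layerCount n m cls μ w Zbar (jn + 1) (traj (jn + 1)) /
        layerCount n m cls μ w Zbar jn (traj jn)) m
  have htel : ∏ jn ∈ Finset.range m,
      layerCount n m cls μ w Zbar (jn + 1) (traj (jn + 1)) /
        layerCount n m cls μ w Zbar jn (traj jn)
      = layerCount n m cls μ w Zbar m (traj m) /
          layerCount n m cls μ w Zbar 0 (traj 0) :=
    telescope_prod_aux (fun jn => layerCount n m cls μ w Zbar jn (traj jn)) m
      (fun j hj => (hφ j hj).ne')
  rw [hfin, htel, hgm, htraj0, one_div, inv_mul_eq_div]
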